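/- Let ξ_n > 0 and η_n > 0 be sequences with ξ_n η_n → 0 and n^{1/2} η_n → ∞. Suppose θ_n ∈ ℝ and σ_n ∈ (0,∞) are sequences such that θ_n/(σ_n ξ_n η_n) → ζ in the extended real line. Then: (1) if |ζ| < 1 then p_n(θ_n, σ_n) → 1; (2) if |ζ| > 1 then p_n(θ_n, σ_n) → 0; (3) if |ζ| = 1 and n^{1/2}(η_n − ζ θ_n/(σ_n ξ_n)) → r in the extended real line, then p_n(θ_n, σ_n) → Φ(r). -/

import Mathlib

open MeasureTheory ProbabilityTheory Filter Set

/-- Standard normal cdf. -/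
noncomputable def Phi (x : ℝ) : ℝ :=
  ∫ t in Iic x, (Real.sqrt (2 * Real.pi))⁻¹ * Real.exp (-t ^ 2 / 2)

/-- Standard normal pdf. -/
noncomputable def stdPhi (t : ℝ) : ℝ :=
  (Real.sqrt (2 * Real.pi))⁻¹ * Real.exp (-t ^ 2 / 2)

/-- Extension of `Phi` to the extended reals, with `PhiE ⊤ = 1` and `PhiE ⊥ = 0`. -/
noncomputable def PhiE (z : EReal) : ℝ :=
  if z = ⊤ then 1 else if z = ⊥ then 0 else Phi z.toReal

/-- Density of `m^{-1/2}` times the square root of a chi-square with `m` degrees of freedom. -/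
noncomputable def rho (m : ℕ) (s : ℝ) : ℝ :=
  if 0 < s then
    (2 : ℝ) ^ ((1 : ℝ) - (m : ℝ) / 2) * (Real.Gamma ((m : ℝ) / 2))⁻¹ * Real.sqrt m *
      ((m : ℝ) * s ^ 2) ^ (((m : ℝ) - 1) / 2) * Real.exp (-(m : ℝ) * s ^ 2 / 2)
  else 0

/-- Known-variance variable deletion probability. -/
noncomputable def pdel (n : ℕ) (ξ η θ σ : ℝ) : ℝ :=
  Phi (Real.sqrt n * (-θ / (σ * ξ) + η)) - Phi (Real.sqrt n * (-θ / (σ * ξ) - η))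

lemma stdPhi_eq (t : ℝ) : stdPhi t = (Real.sqrt (2 * Real.pi))⁻¹ * Real.exp (-(1/2) * t ^ 2) := by
  rw [stdPhi, show -t ^ 2 / 2 = -(1/2) * t^2 by ring]

lemma stdPhi_nonneg (t : ℝ) : 0 ≤ stdPhi t := by
  rw [stdPhi_eq]
  positivity

lemma integrable_stdPhi : Integrable stdPhi := by
  have := (integrable_exp_neg_mul_sq (by norm_num : (0:ℝ) < 1/2)).const_mul
    (Real.sqrt (2 * Real.pi))⁻¹
  exact this.congr (by filter_upwards with t using (stdPhi_eq t).symm)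

lemma integral_stdPhi : ∫ t, stdPhi t = 1 := by
  have h : ∫ t, stdPhi t = (Real.sqrt (2 * Real.pi))⁻¹ * ∫ t : ℝ, Real.exp (-(1/2) * t ^ 2) := by
    rw [← integral_const_mul]
    exact integral_congr_ae (by filter_upwards with t using stdPhi_eq t)
  rw [h, integral_gaussian, show Real.pi / (1/2) = 2 * Real.pi by ring]
  rw [inv_mul_cancel₀]
  positivity

lemma Phi_eq (x : ℝ) : Phi x = ∫ t in Iic x, stdPhi t := rfl

lemma monotone_Phi : Monotone Phi := by
  intro x y hxy
  rw [Phi_eq, Phi_eq]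
  exact setIntegral_mono_set integrable_stdPhi.integrableOn
    (ae_of_all _ fun t => stdPhi_nonneg t) (ae_of_all _ (Iic_subset_Iic.2 hxy))

lemma Phi_nonneg (x : ℝ) : 0 ≤ Phi x :=
  setIntegral_nonneg measurableSet_Iic fun t _ => stdPhi_nonneg t

lemma Phi_le_one (x : ℝ) : Phi x ≤ 1 := by
  rw [Phi_eq, ← integral_stdPhi]
  exact setIntegral_le_integral integrable_stdPhi (ae_of_all _ fun t => stdPhi_nonneg t)

lemma Phi_add_interval (x : ℝ) : Phi x = Phi 0 + ∫ t in (0:ℝ)..x, stdPhi t := by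
  rw [Phi_eq, Phi_eq, ← intervalIntegral.integral_Iic_sub_Iic integrable_stdPhi.integrableOn
    integrable_stdPhi.integrableOn]
  ring

lemma continuous_Phi : Continuous Phi := by
  have h : Continuous fun x : ℝ => ∫ t in (0:ℝ)..x, stdPhi t :=
    integrable_stdPhi.continuous_primitive 0
  have h2 : Phi = fun x => Phi 0 + ∫ t in (0:ℝ)..x, stdPhi t := funext Phi_add_interval
  rw [h2]
  exact continuous_const.add h

lemma tendsto_Phi_atTop : Tendsto Phi atTop (nhds 1) := by
  have h := intervalIntegral_tendsto_integral_Ioi (0:ℝ)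
    (integrable_stdPhi.integrableOn) (tendsto_id (α := ℝ))
  have h2 : Tendsto Phi atTop (nhds (Phi 0 + ∫ t in Ioi (0:ℝ), stdPhi t)) :=
    (tendsto_const_nhds.add h).congr fun x => (Phi_add_interval x).symm
  have h3 : Phi 0 + ∫ t in Ioi (0:ℝ), stdPhi t = 1 := by
    rw [Phi_eq, intervalIntegral.integral_Iic_add_Ioi integrable_stdPhi.integrableOn
      integrable_stdPhi.integrableOn, integral_stdPhi]
  rwa [h3] at h2

lemma tendsto_Phi_atBot : Tendsto Phi atBot (nhds 0) := by
  have h := intervalIntegral_tendsto_integral_Iic (0:ℝ) (μ := volume) (a := fun x : ℝ => x)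
    (integrable_stdPhi.integrableOn) tendsto_id
  -- h : Tendsto (fun x => ∫ t in x..0, stdPhi t) atBot (nhds (Phi 0))
  have h2 : Tendsto (fun x : ℝ => Phi 0 - ∫ t in x..(0:ℝ), stdPhi t) atBot (nhds (Phi 0 - Phi 0)) :=
    tendsto_const_nhds.sub h
  simp only [sub_self] at h2
  refine h2.congr fun x => ?_
  rw [Phi_add_interval x, intervalIntegral.integral_symm]
  ring

lemma Phi_neg (x : ℝ) : Phi (-x) = 1 - Phi x := by
  have h1 : Phi (-x) = ∫ t in Ioi x, stdPhi t := by
    rw [Phi_eq]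
    have heven : ∫ t in Iic (-x), stdPhi t = ∫ t in Iic (-x), stdPhi (-t) := by
      refine setIntegral_congr_fun measurableSet_Iic fun t _ => ?_
      rw [stdPhi, stdPhi, neg_pow t 2]; norm_num
    rw [heven, integral_comp_neg_Iic (-x) stdPhi, neg_neg]
  rw [h1, eq_sub_iff_add_eq, Phi_eq, add_comm,
    intervalIntegral.integral_Iic_add_Ioi integrable_stdPhi.integrableOn
      integrable_stdPhi.integrableOn, integral_stdPhi]

lemma tendsto_Phi_PhiE {a : ℕ → ℝ} {r : EReal}
    (h : Tendsto (fun n => ((a n : ℝ) : EReal)) atTop (nhds r)) :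
    Tendsto (fun n => Phi (a n)) atTop (nhds (PhiE r)) := by
  induction r with
  | bot =>
    have ha : Tendsto a atTop atBot := by
      rw [tendsto_atBot]
      intro x
      have := (EReal.tendsto_nhds_bot_iff_real.mp h) x
      filter_upwards [this] with n hn
      exact_mod_cast le_of_lt (EReal.coe_lt_coe_iff.mp hn)
    simpa [PhiE, Function.comp_def] using tendsto_Phi_atBot.comp ha
  | coe y =>
    have ha : Tendsto a atTop (nhds y) := EReal.tendsto_coe.mp h
    have : PhiE (y : EReal) = Phi y := by simp [PhiE]
    rw [this]
    exact (continuous_Phi.tendsto y).comp ha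
  | top =>
    have ha : Tendsto a atTop atTop := by
      rw [tendsto_atTop]
      intro x
      have := (EReal.tendsto_nhds_top_iff_real.mp h) x
      filter_upwards [this] with n hn
      exact_mod_cast le_of_lt (EReal.coe_lt_coe_iff.mp hn)
    simpa [PhiE, Function.comp_def] using tendsto_Phi_atTop.comp ha


/-- consistent tuning, moving-parameter limits of the deletion probability. -/
theorem stmt_2 (ξ η : ℕ → ℝ) (hξ : ∀ n, 0 < ξ n) (hη : ∀ n, 0 < η n)
    (hxe : Tendsto (fun n : ℕ => ξ n * η n) atTop (nhds 0))
    (hne : Tendsto (fun n : ℕ => Real.sqrt n * η n) atTop atTop)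
    (θ σ : ℕ → ℝ) (hσ : ∀ n, 0 < σ n)
    (ζ : EReal)
    (hζ : Tendsto (fun n : ℕ => ((θ n / (σ n * ξ n * η n) : ℝ) : EReal)) atTop (nhds ζ)) :
    ((-1 < ζ ∧ ζ < 1) →
        Tendsto (fun n : ℕ => pdel n (ξ n) (η n) (θ n) (σ n)) atTop (nhds 1)) ∧
    ((ζ < -1 ∨ 1 < ζ) →
        Tendsto (fun n : ℕ => pdel n (ξ n) (η n) (θ n) (σ n)) atTop (nhds 0)) ∧
    (∀ (ζr : ℝ) (r : EReal), ζ = (ζr : EReal) → |ζr| = 1 →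
        Tendsto (fun n : ℕ => ((Real.sqrt n * (η n - ζr * θ n / (σ n * ξ n)) : ℝ) : EReal))
          atTop (nhds r) →
        Tendsto (fun n : ℕ => pdel n (ξ n) (η n) (θ n) (σ n)) atTop (nhds (PhiE r))) := by
  have hsnn : ∀ n : ℕ, 0 ≤ Real.sqrt n * η n := fun n =>
    mul_nonneg (Real.sqrt_nonneg _) (hη n).le
  have hEA : ∀ n : ℕ, Real.sqrt n * (-θ n / (σ n * ξ n) + η n)
      = (Real.sqrt n * η n) * (1 - θ n / (σ n * ξ n * η n)) := by
    intro n
    have h1 := (hσ n).ne'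
    have h2 := (hξ n).ne'
    have h3 := (hη n).ne'
    field_simp
    ring
  have hEB : ∀ n : ℕ, Real.sqrt n * (-θ n / (σ n * ξ n) - η n)
      = -((Real.sqrt n * η n) * (1 + θ n / (σ n * ξ n * η n))) := by
    intro n
    have h1 := (hσ n).ne'
    have h2 := (hξ n).ne'
    have h3 := (hη n).ne'
    field_simp
    ring
  have hEC : ∀ (c : ℝ) (n : ℕ), Real.sqrt n * (η n - c * θ n / (σ n * ξ n))
      = (Real.sqrt n * η n) * (1 - c * (θ n / (σ n * ξ n * η n))) := by
    intro c n
    have h1 := (hσ n).ne'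
    have h2 := (hξ n).ne'
    have h3 := (hη n).ne'
    field_simp
  have hp : ∀ n : ℕ, pdel n (ξ n) (η n) (θ n) (σ n)
      = Phi ((Real.sqrt n * η n) * (1 - θ n / (σ n * ξ n * η n)))
        - Phi (-((Real.sqrt n * η n) * (1 + θ n / (σ n * ξ n * η n)))) := by
    intro n
    simp only [pdel]
    rw [hEA n, hEB n]
  refine ⟨?_, ?_, ?_⟩
  · rintro ⟨h1, h2⟩
    have hzt : ζ ≠ ⊤ := (h2.trans_le le_top).ne
    have hzb : ζ ≠ ⊥ := (bot_le.trans_lt h1).ne'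
    have hcz : ((ζ.toReal : ℝ) : EReal) = ζ := EReal.coe_toReal hzt hzb
    set z := ζ.toReal with hzdef
    have ht : Tendsto (fun n : ℕ => θ n / (σ n * ξ n * η n)) atTop (nhds z) := by
      apply EReal.tendsto_coe.mp
      rw [hcz]; exact hζ
    have hz1 : z < 1 := by rw [← hcz] at h2; exact_mod_cast h2
    have hz2 : -1 < z := by
      rw [← hcz, show ((-1:EReal)) = ((-1:ℝ):EReal) from by norm_num] at h1
      exact EReal.coe_lt_coe_iff.mp h1
    have hA : Tendsto (fun n : ℕ => (Real.sqrt n * η n) * (1 - θ n / (σ n * ξ n * η n)))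
        atTop atTop :=
      hne.atTop_mul_pos (by linarith) (tendsto_const_nhds.sub ht)
    have hB : Tendsto (fun n : ℕ => -((Real.sqrt n * η n) * (1 + θ n / (σ n * ξ n * η n))))
        atTop atBot :=
      tendsto_neg_atTop_atBot.comp (hne.atTop_mul_pos (by linarith) (tendsto_const_nhds.add ht))
    have hfin := (tendsto_Phi_atTop.comp hA).sub (tendsto_Phi_atBot.comp hB)
    rw [sub_zero] at hfin
    exact hfin.congr fun n => (hp n).symm
  · rintro (hlt | hgt)
    · obtain ⟨c, hc1, hc2⟩ := exists_between hlt
      have hct : c ≠ ⊤ := (hc2.trans_le le_top).ne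
      have hcb : c ≠ ⊥ := (bot_le.trans_lt hc1).ne'
      have hccr : ((c.toReal : ℝ) : EReal) = c := EReal.coe_toReal hct hcb
      set cr := c.toReal with hcrdef
      have hcr1 : cr < -1 := by
        rw [← hccr, show ((-1:EReal)) = ((-1:ℝ):EReal) from by norm_num] at hc2
        exact EReal.coe_lt_coe_iff.mp hc2
      have hev : ∀ᶠ n in atTop, θ n / (σ n * ξ n * η n) < cr := by
        rw [← hccr] at hc1
        filter_upwards [hζ.eventually_lt_const hc1] with n hn
        exact_mod_cast hn
      have hBtop : Tendsto (fun n : ℕ => (Real.sqrt n * η n) * (-(1 + cr))) atTop atTop :=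
        hne.atTop_mul_pos (by linarith) tendsto_const_nhds
      have hlim : Tendsto (fun n : ℕ => 1 - Phi ((Real.sqrt n * η n) * (-(1 + cr))))
          atTop (nhds 0) := by
        have h := (tendsto_const_nhds (x := (1:ℝ)) (f := atTop (α := ℕ))).sub
          (tendsto_Phi_atTop.comp hBtop)
        simpa using h
      refine squeeze_zero' ?_ ?_ hlim
      · filter_upwards with n
        rw [hp n]
        have hba : -((Real.sqrt n * η n) * (1 + θ n / (σ n * ξ n * η n)))
            ≤ (Real.sqrt n * η n) * (1 - θ n / (σ n * ξ n * η n)) := by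
          nlinarith [hsnn n]
        exact sub_nonneg.2 (monotone_Phi hba)
      · filter_upwards [hev] with n hn
        rw [hp n]
        have ha1 : Phi ((Real.sqrt n * η n) * (1 - θ n / (σ n * ξ n * η n))) ≤ 1 := Phi_le_one _
        have ha2 : Phi ((Real.sqrt n * η n) * (-(1 + cr)))
            ≤ Phi (-((Real.sqrt n * η n) * (1 + θ n / (σ n * ξ n * η n)))) := by
          apply monotone_Phi
          nlinarith [mul_nonneg (hsnn n) (by linarith : (0:ℝ) ≤ cr - θ n / (σ n * ξ n * η n))]
        linarith
    · obtain ⟨c, hc1, hc2⟩ := exists_between hgt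
      have hct : c ≠ ⊤ := (hc2.trans_le le_top).ne
      have hcb : c ≠ ⊥ := (bot_le.trans_lt hc1).ne'
      have hccr : ((c.toReal : ℝ) : EReal) = c := EReal.coe_toReal hct hcb
      set cr := c.toReal with hcrdef
      have hcr1 : 1 < cr := by
        rw [← hccr] at hc1
        exact_mod_cast hc1
      have hev : ∀ᶠ n in atTop, cr < θ n / (σ n * ξ n * η n) := by
        rw [← hccr] at hc2
        filter_upwards [hζ.eventually_const_lt hc2] with n hn
        exact_mod_cast hn
      have hAbot : Tendsto (fun n : ℕ => (Real.sqrt n * η n) * (1 - cr)) atTop atBot :=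
        hne.atTop_mul_const_of_neg (by linarith)
      have hlim : Tendsto (fun n : ℕ => Phi ((Real.sqrt n * η n) * (1 - cr))) atTop (nhds 0) :=
        tendsto_Phi_atBot.comp hAbot
      refine squeeze_zero' ?_ ?_ hlim
      · filter_upwards with n
        rw [hp n]
        have hba : -((Real.sqrt n * η n) * (1 + θ n / (σ n * ξ n * η n)))
            ≤ (Real.sqrt n * η n) * (1 - θ n / (σ n * ξ n * η n)) := by
          nlinarith [hsnn n]
        exact sub_nonneg.2 (monotone_Phi hba)
      · filter_upwards [hev] with n hn
        rw [hp n]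
        have ha1 : 0 ≤ Phi (-((Real.sqrt n * η n) * (1 + θ n / (σ n * ξ n * η n)))) :=
          Phi_nonneg _
        have ha2 : Phi ((Real.sqrt n * η n) * (1 - θ n / (σ n * ξ n * η n)))
            ≤ Phi ((Real.sqrt n * η n) * (1 - cr)) := by
          apply monotone_Phi
          nlinarith [mul_nonneg (hsnn n) (by linarith : (0:ℝ) ≤ θ n / (σ n * ξ n * η n) - cr)]
        linarith
  · rintro ζr r rfl habs hr
    have ht : Tendsto (fun n : ℕ => θ n / (σ n * ξ n * η n)) atTop (nhds ζr) :=
      EReal.tendsto_coe.mp hζ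
    rcases (abs_eq (by norm_num : (0:ℝ) ≤ 1)).mp habs with h1 | h1 <;> subst h1
    · have hr' : Tendsto
          (fun n : ℕ => (((Real.sqrt n * η n) * (1 - θ n / (σ n * ξ n * η n)) : ℝ) : EReal))
          atTop (nhds r) := by
        refine hr.congr fun n => ?_
        exact congrArg Real.toEReal (by rw [hEC 1 n]; ring)
      have hPa := tendsto_Phi_PhiE hr'
      have hB : Tendsto (fun n : ℕ => -((Real.sqrt n * η n) * (1 + θ n / (σ n * ξ n * η n))))
          atTop atBot :=
        tendsto_neg_atTop_atBot.comp
          (hne.atTop_mul_pos (by norm_num : (0:ℝ) < 1 + 1) (tendsto_const_nhds.add ht))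
      have hfin := hPa.sub (tendsto_Phi_atBot.comp hB)
      rw [sub_zero] at hfin
      exact hfin.congr fun n => (hp n).symm
    · have hr' : Tendsto
          (fun n : ℕ => (((Real.sqrt n * η n) * (1 + θ n / (σ n * ξ n * η n)) : ℝ) : EReal))
          atTop (nhds r) := by
        refine hr.congr fun n => ?_
        exact congrArg Real.toEReal (by rw [hEC (-1) n]; ring)
      have hPb := tendsto_Phi_PhiE hr'
      have hA : Tendsto (fun n : ℕ => (Real.sqrt n * η n) * (1 - θ n / (σ n * ξ n * η n)))
          atTop atTop :=
        hne.atTop_mul_pos (by norm_num : (0:ℝ) < 1 - (-1)) (tendsto_const_nhds.sub ht)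
      have hcomb := (tendsto_Phi_atTop.comp hA).sub
        ((tendsto_const_nhds (x := (1:ℝ))).sub hPb)
      have hid : (1:ℝ) - (1 - PhiE r) = PhiE r := by ring
      rw [hid] at hcomb
      refine hcomb.congr fun n => ?_
      simp only [Function.comp_apply]
      rw [hp n, Phi_neg]
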